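/- arXiv:1009.3532 — 2 statements merged into one kernel-verified Lean document; each statement's English description precedes it below -/
import Mathlib

section
/- Let a group G act on a fine graph K with finite edge stabilizers. Then for any two distinct vertices u and v of K lying in the same connected component, the intersection of the stabilizers G_u ∩ G_v is finite. -/
open SimpleGraph

universe u v

variable {V : Type u} {G : Type v}

/-- A graph is fine if each edge lies in only finitely many circuits (embedded
cycles) of length `n`, for every `n`. -/
def Fine (K : SimpleGraph V) : Prop :=
  ∀ (n : ℕ) (u w : V), K.Adj u w →
    {c : K.Walk u u | c.IsCycle ∧ c.length = n ∧ s(u, w) ∈ c.edges}.Finite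

/-- An action of `G` by permutations of `V` preserves the graph `K`. -/
def ActsOn [Group G] (φ : G →* Equiv.Perm V) (K : SimpleGraph V) : Prop :=
  ∀ (g : G) (u w : V), K.Adj u w → K.Adj (φ g u) (φ g w)

/-- The stabilizer of a vertex. -/
def stab [Group G] (φ : G →* Equiv.Perm V) (x : V) : Subgroup G where
  carrier := {g | φ g x = x}
  one_mem' := by simp
  mul_mem' := by
    intro a b ha hb
    simp only [Set.mem_setOf_eq, map_mul, Equiv.Perm.mul_apply] at *
    rw [hb, ha]
  inv_mem' := by
    intro a ha
    simp only [Set.mem_setOf_eq, map_inv] at *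
    conv_lhs => rw [← ha]
    simp

/-- The conjugate subgroup `g P g⁻¹`. -/
def conjSub [Group G] (g : G) (P : Subgroup G) : Subgroup G :=
  Subgroup.map (MulAut.conj g).toMonoidHom P

/-- All edge stabilizers are finite (we use pointwise stabilizers of the two
endpoints; the actions considered are without inversions). -/
def FiniteEdgeStabs [Group G] (φ : G →* Equiv.Perm V) (K : SimpleGraph V) : Prop :=
  ∀ u w : V, K.Adj u w → ((stab φ u ⊓ stab φ w : Subgroup G) : Set G).Finite

/-- There are finitely many `G`-orbits of edges. -/
def FinEdgeOrbits [Group G] (φ : G →* Equiv.Perm V) (K : SimpleGraph V) : Prop :=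
  ∃ F : Set (V × V), F.Finite ∧
    ∀ u w : V, K.Adj u w → ∃ g : G, ∃ p ∈ F, φ g p.1 = u ∧ φ g p.2 = w

/-- Gromov hyperbolicity of the path metric of a graph (four point condition). -/
def Hyperbolic (K : SimpleGraph V) : Prop :=
  ∃ δ : ℝ, ∀ x y z t : V,
    (K.dist x y : ℝ) + (K.dist z t : ℝ) ≤
      max ((K.dist x z : ℝ) + (K.dist y t : ℝ)) ((K.dist x t : ℝ) + (K.dist y z : ℝ)) + δ

/-- `K` is a `(G, P)`-graph witnessing that `G` is hyperbolic relative to the finite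
collection `Ps` of subgroups: `K` is a connected fine hyperbolic graph, `G` acts
on it without inversions with finite edge stabilizers and finitely many orbits of
edges, and `Ps` is a set of representatives of the distinct conjugacy classes of
vertex stabilizers, with every infinite vertex stabilizer represented. -/
structure IsGPGraph [Group G] (φ : G →* Equiv.Perm V) (Ps : Set (Subgroup G))
    (K : SimpleGraph V) : Prop where
  finP : Ps.Finite
  conn : K.Connected
  fine : Fine K
  hyp : Hyperbolic K
  acts : ActsOn φ K
  noInv : ∀ (g : G) (u w : V), K.Adj u w → φ g u = w → φ g w ≠ u
  finStabs : FiniteEdgeStabs φ K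
  finOrbits : FinEdgeOrbits φ K
  parab : ∀ x : V, ¬ ((stab φ x : Set G)).Finite →
    ∃ P ∈ Ps, ∃ g : G, stab φ x = conjSub g P
  reps : ∀ P ∈ Ps, ∃ x : V, stab φ x = P
  distinct : ∀ P ∈ Ps, ∀ Q ∈ Ps, (∃ g : G, conjSub g P = Q) → P = Q

namespace FineAux

/-- Walks are determined by their supports. -/
lemma support_injective {K : SimpleGraph V} :
    ∀ {a b : V} (p q : K.Walk a b), p.support = q.support → p = q := by
  intro a b p
  induction p with
  | nil =>
    intro q h
    cases q with
    | nil => rfl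
    | cons h' q' =>
      exfalso
      rw [Walk.support_nil, Walk.support_cons, Walk.support_eq_cons q'] at h
      simp at h
  | cons h p ih =>
    intro q hq
    cases q with
    | nil =>
      exfalso
      rw [Walk.support_nil, Walk.support_cons, Walk.support_eq_cons p] at hq
      simp at hq
    | cons h' q' =>
      rw [Walk.support_cons, Walk.support_cons] at hq
      have hsupp : p.support = q'.support := List.cons_injective hq
      have h2 := hsupp
      rw [Walk.support_eq_cons p, Walk.support_eq_cons q'] at h2
      obtain ⟨hbb, -⟩ := List.cons_eq_cons.mp h2
      subst hbb
      rw [ih q' hsupp]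

/-- The cycle built from two arcs with distinct initial vertices. -/
def mkCycle [DecidableEq V] {K : SimpleGraph V} {a b w0 w : V} (hw0 : K.Adj a w0) (hw : K.Adj a w)
    (q0 : K.Walk w0 b) (q : K.Walk w b) : K.Walk a a :=
  Walk.cons hw0 (((q0.append q.reverse).bypass).concat hw.symm)

lemma mkCycle_getVert [DecidableEq V] {K : SimpleGraph V} {a b w0 w : V} (hw0 : K.Adj a w0) (hw : K.Adj a w)
    (q0 : K.Walk w0 b) (q : K.Walk w b) :
    (mkCycle hw0 hw q0 q).getVert ((mkCycle hw0 hw q0 q).length - 1) = w := by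
  set r := (q0.append q.reverse).bypass with hr
  have hc : mkCycle hw0 hw q0 q = Walk.cons hw0 (r.concat hw.symm) := rfl
  have hlen : (mkCycle hw0 hw q0 q).length = r.length + 2 := by
    rw [hc]; simp [Walk.length_concat]
  rw [hlen, hc]
  show (Walk.cons hw0 (r.concat hw.symm)).getVert (r.length + 1) = w
  rw [Walk.getVert_cons_succ]
  rw [Walk.concat, Walk.getVert_append]
  simp

lemma mkCycle_spec [DecidableEq V] {K : SimpleGraph V} {a b w0 w : V} (hw0 : K.Adj a w0) (hw : K.Adj a w)
    (q0 : K.Walk w0 b) (q : K.Walk w b) (hq0 : q0.IsPath) (hq : q.IsPath)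
    (ha0 : a ∉ q0.support) (ha : a ∉ q.support) (hne : w ≠ w0) :
    (mkCycle hw0 hw q0 q).IsCycle ∧ s(a, w0) ∈ (mkCycle hw0 hw q0 q).edges ∧
      (mkCycle hw0 hw q0 q).length ≤ q0.length + q.length + 2 := by
  set r := (q0.append q.reverse).bypass with hr
  have hrp : r.IsPath := Walk.bypass_isPath _
  have har : a ∉ r.support := by
    intro hmem
    have := Walk.support_bypass_subset _ hmem
    rw [Walk.mem_support_append_iff] at this
    rcases this with h1 | h1
    · exact ha0 h1
    · rw [Walk.support_reverse, List.mem_reverse] at h1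
      exact ha h1
  refine ⟨?_, ?_, ?_⟩
  · rw [mkCycle, Walk.cons_isCycle_iff]
    constructor
    · rw [← Walk.isPath_reverse_iff, Walk.reverse_concat, Walk.cons_isPath_iff]
      refine ⟨hrp.reverse, ?_⟩
      rw [Walk.support_reverse, List.mem_reverse]
      exact har
    · intro hmem
      rw [Walk.edges_concat, List.concat_eq_append, List.mem_append, List.mem_singleton] at hmem
      rcases hmem with h1 | h1
      · exact har (Walk.fst_mem_support_of_mem_edges r h1)
      · rw [Sym2.eq_iff] at h1
        rcases h1 with ⟨h2, h3⟩ | ⟨h2, h3⟩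
        · exact hw.ne h2
        · exact hne h3.symm
  · simp [mkCycle]
  · have hc : mkCycle hw0 hw q0 q = Walk.cons hw0 (r.concat hw.symm) := rfl
    have h1 : (mkCycle hw0 hw q0 q).length = r.length + 2 := by
      rw [hc]; simp [Walk.length_concat]
    have h2 : r.length ≤ q0.length + q.length := by
      calc r.length ≤ (q0.append q.reverse).length := Walk.length_bypass_le _
        _ = q0.length + q.length := by rw [Walk.length_append, Walk.length_reverse]
    omega

/-- The set of possible first vertices of arcs from `a` to `b` (of length `n`) is finite. -/
lemma firstVertex_finite {K : SimpleGraph V} (hfine : Fine K) (a b : V) (n : ℕ) :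
    {x : V | K.Adj a x ∧ ∃ q : K.Walk x b, q.IsPath ∧ q.length = n ∧ a ∉ q.support}.Finite := by
  classical
  set FV := {x : V | K.Adj a x ∧ ∃ q : K.Walk x b, q.IsPath ∧ q.length = n ∧ a ∉ q.support}
    with hFV
  rcases FV.eq_empty_or_nonempty with h | ⟨w0, hw0⟩
  · rw [h]; exact Set.finite_empty
  obtain ⟨hadj0, q0, hq0p, hq0l, hq0a⟩ := hw0
  set F : V → K.Walk a a := fun x =>
    if hx : x ∈ FV then mkCycle hadj0 hx.1 q0 hx.2.choose else Walk.nil with hF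
  set T : Set (K.Walk a a) := ⋃ m ∈ Finset.range (2 * n + 3),
    {c : K.Walk a a | c.IsCycle ∧ c.length = m ∧ s(a, w0) ∈ c.edges} with hT
  have hTfin : T.Finite :=
    Set.Finite.biUnion (Finset.range (2 * n + 3)).finite_toSet
      (fun m _ => hfine m a w0 hadj0)
  have himg : F '' (FV \ {w0}) ⊆ T := by
    rintro c ⟨x, ⟨hxFV, hxw0⟩, rfl⟩
    have hxw0' : x ≠ w0 := hxw0
    obtain ⟨hqp, hql, hqa⟩ := hxFV.2.choose_spec
    have hspec := mkCycle_spec hadj0 hxFV.1 q0 hxFV.2.choose hq0p hqp hq0a hqa hxw0'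
    rw [hF]
    simp only [dif_pos hxFV]
    rw [hT]
    simp only [Set.mem_iUnion, Finset.coe_range, Set.mem_setOf_eq]
    refine ⟨(mkCycle hadj0 hxFV.1 q0 hxFV.2.choose).length, ?_, hspec.1, rfl, hspec.2.1⟩
    have h22 := hspec.2.2
    exact Finset.mem_range.mpr (by omega)
  have hinj : Set.InjOn F (FV \ {w0}) := by
    rintro x1 ⟨hx1, _⟩ x2 ⟨hx2, _⟩ heq
    have e1 : (F x1).getVert ((F x1).length - 1) = x1 := by
      rw [hF]; simp only [dif_pos hx1]; exact mkCycle_getVert _ _ _ _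
    have e2 : (F x2).getVert ((F x2).length - 1) = x2 := by
      rw [hF]; simp only [dif_pos hx2]; exact mkCycle_getVert _ _ _ _
    rw [← e1, ← e2, heq]
  have hdfin : (FV \ {w0}).Finite :=
    Set.Finite.of_finite_image (hTfin.subset himg) hinj
  have : FV ⊆ insert w0 (FV \ {w0}) := by
    intro x hx
    by_cases hxx : x = w0
    · exact Set.mem_insert_iff.mpr (Or.inl hxx)
    · exact Set.mem_insert_iff.mpr (Or.inr ⟨hx, hxx⟩)
  exact (hdfin.insert w0).subset this

/-- Supports of arcs of length `n` from `a` to `b` form a finite set. -/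
lemma arcSup_finite {K : SimpleGraph V} (hfine : Fine K) (b : V) :
    ∀ (n : ℕ) (a : V), a ≠ b →
      {l : List V | ∃ p : K.Walk a b, p.IsPath ∧ p.length = n ∧ p.support = l}.Finite := by
  intro n
  induction n with
  | zero =>
    intro a hne
    convert Set.finite_empty
    rw [Set.eq_empty_iff_forall_notMem]
    rintro l ⟨p, _, hl, -⟩
    cases p with
    | nil => exact hne rfl
    | cons h q => simp at hl
  | succ n ih =>
    intro a hne
    have hsub : {l : List V | ∃ p : K.Walk a b, p.IsPath ∧ p.length = n + 1 ∧ p.support = l} ⊆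
        ⋃ x ∈ {x : V | K.Adj a x ∧ ∃ q : K.Walk x b, q.IsPath ∧ q.length = n ∧ a ∉ q.support},
          (List.cons a) '' {l : List V | ∃ q : K.Walk x b, q.IsPath ∧ q.length = n ∧
            q.support = l} := by
      rintro l ⟨p, hp, hlen, hsupp⟩
      cases p with
      | nil => simp at hlen
      | cons h q =>
        rw [Walk.cons_isPath_iff] at hp
        have hql : q.length = n := by simpa using hlen
        simp only [Set.mem_iUnion, Set.mem_image, Set.mem_setOf_eq]
        exact ⟨_, ⟨h, q, hp.1, hql, hp.2⟩, q.support, ⟨q, hp.1, hql, rfl⟩,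
          by rw [← hsupp, Walk.support_cons]⟩
    refine Set.Finite.subset (Set.Finite.biUnion (firstVertex_finite hfine a b n) ?_) hsub
    intro x _
    refine Set.Finite.image _ ?_
    by_cases hxb : x = b
    · subst hxb
      have hss : {l : List V | ∃ q : K.Walk x x, q.IsPath ∧ q.length = n ∧ q.support = l} ⊆
          {[x]} := by
        rintro l ⟨q, hq, _, hsupp⟩
        have hpn : (⟨q, hq⟩ : K.Path x x) = SimpleGraph.Path.nil := SimpleGraph.Path.loop_eq _
        have hqnil : q = Walk.nil := congrArg Subtype.val hpn
        rw [hqnil] at hsupp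
        simp only [Walk.support_nil] at hsupp
        simp [← hsupp]
      exact (Set.finite_singleton _).subset hss
    · exact ih x hxb

/-- In a fine graph, the set of arcs of length `n` between distinct vertices is finite. -/
lemma arcs_finite {K : SimpleGraph V} (hfine : Fine K) {a b : V} (hne : a ≠ b) (n : ℕ) :
    {p : K.Walk a b | p.IsPath ∧ p.length = n}.Finite := by
  have himg : Walk.support '' {p : K.Walk a b | p.IsPath ∧ p.length = n} ⊆
      {l : List V | ∃ p : K.Walk a b, p.IsPath ∧ p.length = n ∧ p.support = l} := by
    rintro l ⟨p, ⟨hp, hlen⟩, rfl⟩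
    exact ⟨p, hp, hlen, rfl⟩
  exact Set.Finite.of_finite_image ((arcSup_finite hfine b n a hne).subset himg)
    (fun p _ q _ h => support_injective p q h)

end FineAux

/-- If `G` acts on a fine graph `K` with finite edge stabilizers, then the
intersection of the stabilizers of two distinct vertices in the same connected
component is finite. -/
theorem stabilizer_inter_finite_of_fine [Group G] (φ : G →* Equiv.Perm V)
    (K : SimpleGraph V) (hfine : Fine K) (hacts : ActsOn φ K)
    (hstabs : FiniteEdgeStabs φ K) (u v : V) (hne : u ≠ v)
    (hreach : K.Reachable u v) :
    ((stab φ u ⊓ stab φ v : Subgroup G) : Set G).Finite := by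
  classical
  obtain ⟨p0⟩ := hreach
  set p := p0.bypass with hp0
  have hp : p.IsPath := Walk.bypass_isPath _
  obtain ⟨x, hux, q, hpq⟩ := Walk.not_nil_iff.mp (Walk.not_nil_of_ne hne (p := p))
  have hA : {r : K.Walk u v | r.IsPath ∧ r.length = p.length}.Finite :=
    FineAux.arcs_finite hfine hne p.length
  set f : G → (K →g K) := fun g => ⟨φ g, fun {c d} h => hacts g c d h⟩ with hf
  set F : G → K.Walk u v := fun g =>
    if hg : φ g u = u ∧ φ g v = v then (p.map (f g)).copy hg.1 hg.2 else p with hFdef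
  have hmemS : ∀ g : G, g ∈ (stab φ u ⊓ stab φ v : Subgroup G) ↔ (φ g u = u ∧ φ g v = v) := by
    intro g
    rw [Subgroup.mem_inf]
    exact Iff.rfl
  have hFmem : ∀ g : G, g ∈ (stab φ u ⊓ stab φ v : Subgroup G) →
      F g ∈ {r : K.Walk u v | r.IsPath ∧ r.length = p.length} := by
    intro g hg
    have hg' := (hmemS g).mp hg
    rw [hFdef]
    simp only [dif_pos hg', Set.mem_setOf_eq]
    constructor
    · rw [Walk.isPath_copy]
      exact Walk.map_isPath_of_injective (φ g).injective hp
    · rw [Walk.length_copy, Walk.length_map]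
  have hfib : ∀ r : K.Walk u v,
      {g : G | g ∈ (stab φ u ⊓ stab φ v : Subgroup G) ∧ F g = r}.Finite := by
    intro r
    rcases Set.eq_empty_or_nonempty
        {g : G | g ∈ (stab φ u ⊓ stab φ v : Subgroup G) ∧ F g = r} with he | ⟨g₀, hg₀S, hg₀F⟩
    · rw [he]; exact Set.finite_empty
    have hE : ((stab φ u ⊓ stab φ x : Subgroup G) : Set G).Finite := hstabs u x hux
    refine (hE.image (fun k => g₀ * k)).subset ?_
    rintro g ⟨hgS, hgF⟩
    refine ⟨g₀⁻¹ * g, ?_, by group⟩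
    have hgS' := (hmemS g).mp hgS
    have hg₀S' := (hmemS g₀).mp hg₀S
    have heqF : F g = F g₀ := hgF.trans hg₀F.symm
    rw [hFdef] at heqF
    simp only [dif_pos hgS', dif_pos hg₀S'] at heqF
    have hsupp : p.support.map (f g) = p.support.map (f g₀) := by
      have := congrArg Walk.support heqF
      rwa [Walk.support_copy, Walk.support_copy, Walk.support_map, Walk.support_map] at this
    have hx' : x ∈ p.support := by
      rw [hpq, Walk.support_cons]
      exact List.mem_cons_of_mem _ (Walk.start_mem_support q)
    have hgx : φ g x = φ g₀ x := List.map_inj_left.mp hsupp x hx'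
    have hmu : g₀⁻¹ * g ∈ stab φ u :=
      Subgroup.mul_mem _ (Subgroup.inv_mem _ ((Subgroup.mem_inf.mp hg₀S).1))
        ((Subgroup.mem_inf.mp hgS).1)
    have hmx : g₀⁻¹ * g ∈ stab φ x := by
      show φ (g₀⁻¹ * g) x = x
      rw [map_mul, map_inv, Equiv.Perm.mul_apply, hgx]
      exact Equiv.symm_apply_apply (φ g₀) x
    exact SetLike.mem_coe.mpr (Subgroup.mem_inf.mpr ⟨hmu, hmx⟩)
  have hsub : ((stab φ u ⊓ stab φ v : Subgroup G) : Set G) ⊆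
      ⋃ r ∈ {r : K.Walk u v | r.IsPath ∧ r.length = p.length},
        {g : G | g ∈ (stab φ u ⊓ stab φ v : Subgroup G) ∧ F g = r} := by
    intro g hg
    simp only [Set.mem_iUnion, Set.mem_setOf_eq]
    exact ⟨F g, hFmem g hg, hg, rfl⟩
  exact (Set.Finite.biUnion hA (fun r _ => hfib r)).subset hsub
end

section
/- Let G be hyperbolic relative to P, and let K₂ ↪ K₁ be a G-equivariant simplicial embedding of (G,P)-graphs. Then every vertex of K₁ of infinite valence lies in (the image of) K₂. -/
open SimpleGraph

universe u v

variable {V : Type u} {G : Type v}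

private lemma splice_aux {K : SimpleGraph V} {v w : V} (hw : K.Adj v w) :
    ∀ {w' u : V} (p : K.Walk w' u) (q : K.Walk w u), q.IsPath → v ∉ q.support →
      p.IsPath → v ∉ p.support → w' ∉ q.support →
      ∃ R : K.Walk w' v, R.IsPath ∧ s(v, w) ∈ R.edges ∧
        R.length ≤ p.length + q.length + 1 ∧
        (∀ y, s(v, y) ∈ R.edges → y = w) ∧
        (∀ y ∈ R.support, y ∈ p.support ∨ y = v ∨ y ∈ q.support) := by
  classical
  intro w' u p
  induction p with
  | nil =>
    intro q _ _ _ _ hw'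
    exact absurd q.end_mem_support hw'
  | @cons w'' x u h' p'' ih =>
    intro q hq hvq hp hvp hw'
    rw [Walk.cons_isPath_iff] at hp
    obtain ⟨hp'', hw''p⟩ := hp
    rw [Walk.support_cons, List.mem_cons, not_or] at hvp
    obtain ⟨hvw'', hvp''⟩ := hvp
    have hvx : v ≠ x := fun h => hvp'' (h ▸ p''.start_mem_support)
    by_cases hx : x ∈ q.support
    · have hTpath : (q.takeUntil x hx).IsPath := hq.takeUntil hx
      have hvT : v ∉ (q.takeUntil x hx).support :=
        fun hh => hvq (q.support_takeUntil_subset hx hh)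
      have hcons : (Walk.cons hw (q.takeUntil x hx)).IsPath := by
        rw [Walk.cons_isPath_iff]; exact ⟨hTpath, hvT⟩
      refine ⟨Walk.cons h' (Walk.cons hw (q.takeUntil x hx)).reverse, ?_, ?_, ?_, ?_, ?_⟩
      · rw [Walk.cons_isPath_iff]
        refine ⟨(Walk.isPath_reverse_iff _).mpr hcons, ?_⟩
        rw [Walk.support_reverse, List.mem_reverse, Walk.support_cons, List.mem_cons, not_or]
        exact ⟨fun h => hvw'' h.symm, fun h => hw' (q.support_takeUntil_subset hx h)⟩
      · rw [Walk.edges_cons, List.mem_cons]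
        right
        rw [Walk.edges_reverse, List.mem_reverse, Walk.edges_cons]
        exact List.mem_cons_self
      · rw [Walk.length_cons, Walk.length_reverse, Walk.length_cons, Walk.length_cons]
        have := q.length_takeUntil_le hx
        omega
      · intro y hy
        rw [Walk.edges_cons, List.mem_cons, Walk.edges_reverse, List.mem_reverse,
          Walk.edges_cons, List.mem_cons] at hy
        rcases hy with h1 | h2 | h3
        · rw [Sym2.eq_iff] at h1
          rcases h1 with ⟨h, _⟩ | ⟨h, _⟩
          · exact absurd h hvw''
          · exact absurd h hvx
        · rw [Sym2.eq_iff] at h2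
          rcases h2 with ⟨_, h⟩ | ⟨h, _⟩
          · exact h
          · exact absurd h hw.ne
        · exact absurd ((q.takeUntil x hx).fst_mem_support_of_mem_edges h3) hvT
      · intro y hy
        rw [Walk.support_cons, List.mem_cons, Walk.support_reverse, List.mem_reverse,
          Walk.support_cons, List.mem_cons] at hy
        rcases hy with rfl | rfl | h3
        · left; exact Walk.start_mem_support _
        · right; left; rfl
        · right; right; exact q.support_takeUntil_subset hx h3
    · obtain ⟨R'', hRp, hRe, hRl, hRiv, hRsup⟩ := ih q hq hvq hp'' hvp'' hx
      refine ⟨Walk.cons h' R'', ?_, ?_, ?_, ?_, ?_⟩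
      · rw [Walk.cons_isPath_iff]
        refine ⟨hRp, fun hmem => ?_⟩
        rcases hRsup w'' hmem with h1 | h2 | h3
        · exact hw''p h1
        · exact hvw'' h2.symm
        · exact hw' h3
      · rw [Walk.edges_cons, List.mem_cons]; right; exact hRe
      · rw [Walk.length_cons, Walk.length_cons]
        omega
      · intro y hy
        rw [Walk.edges_cons, List.mem_cons] at hy
        rcases hy with h1 | h2
        · rw [Sym2.eq_iff] at h1
          rcases h1 with ⟨h, _⟩ | ⟨h, _⟩
          · exact absurd h hvw''
          · exact absurd h hvx
        · exact hRiv y h2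
      · intro y hy
        rw [Walk.support_cons, List.mem_cons] at hy
        rcases hy with rfl | h2
        · left; exact Walk.start_mem_support _
        · rcases hRsup y h2 with h | h | h
          · left; rw [Walk.support_cons]; exact List.mem_cons_of_mem _ h
          · right; left; exact h
          · right; right; exact h

private lemma splice {K : SimpleGraph V} {v w u w' : V} (hw : K.Adj v w) (hw' : K.Adj v w')
    (hne : w' ≠ w) (q : K.Walk w u) (hq : q.IsPath) (hvq : v ∉ q.support)
    (p : K.Walk w' u) (hp : p.IsPath) (hvp : v ∉ p.support) :
    ∃ c : K.Walk v v, c.IsCycle ∧ s(v, w) ∈ c.edges ∧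
      c.length ≤ p.length + q.length + 2 ∧ c.support.tail.head? = some w' := by
  classical
  by_cases hx : w' ∈ q.support
  · have hTpath : (q.takeUntil w' hx).IsPath := hq.takeUntil hx
    have hvT : v ∉ (q.takeUntil w' hx).support :=
      fun hh => hvq (q.support_takeUntil_subset hx hh)
    have hcons : (Walk.cons hw (q.takeUntil w' hx)).IsPath := by
      rw [Walk.cons_isPath_iff]; exact ⟨hTpath, hvT⟩
    refine ⟨Walk.cons hw' (Walk.cons hw (q.takeUntil w' hx)).reverse, ?_, ?_, ?_, ?_⟩
    · rw [Walk.cons_isCycle_iff]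
      refine ⟨(Walk.isPath_reverse_iff _).mpr hcons, ?_⟩
      rw [Walk.edges_reverse, List.mem_reverse, Walk.edges_cons, List.mem_cons, not_or]
      constructor
      · intro h
        rw [Sym2.eq_iff] at h
        rcases h with ⟨_, h⟩ | ⟨h, _⟩
        · exact hne h
        · exact hw.ne h
      · exact fun h => hvT ((q.takeUntil w' hx).fst_mem_support_of_mem_edges h)
    · rw [Walk.edges_cons, List.mem_cons]
      right
      rw [Walk.edges_reverse, List.mem_reverse, Walk.edges_cons]
      exact List.mem_cons_self
    · rw [Walk.length_cons, Walk.length_reverse, Walk.length_cons]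
      have := q.length_takeUntil_le hx
      omega
    · rw [Walk.support_cons, List.tail_cons, Walk.support_eq_cons]
      rfl
  · obtain ⟨R, hRp, hRe, hRl, hRiv, _⟩ := splice_aux hw p q hq hvq hp hvp hx
    refine ⟨Walk.cons hw' R, ?_, ?_, ?_, ?_⟩
    · rw [Walk.cons_isCycle_iff]
      exact ⟨hRp, fun h => hne (hRiv w' h)⟩
    · rw [Walk.edges_cons, List.mem_cons]; right; exact hRe
    · rw [Walk.length_cons]; omega
    · rw [Walk.support_cons, List.tail_cons, Walk.support_eq_cons]
      rfl

private def actHom [Group G] (φ : G →* Equiv.Perm V) {K : SimpleGraph V}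
    (ha : ActsOn φ K) (g : G) : K →g K :=
  ⟨⇑(φ g), fun {a b} hab => ha g a b hab⟩

private lemma dist_act_le [Group G] {φ : G →* Equiv.Perm V} {K : SimpleGraph V}
    (hc : K.Connected) (ha : ActsOn φ K) (g : G) (a b : V) :
    K.dist (φ g a) (φ g b) ≤ K.dist a b := by
  obtain ⟨p, hp⟩ := hc.exists_walk_length_eq_dist a b
  calc K.dist (φ g a) (φ g b) ≤ (p.map (actHom φ ha g)).length := SimpleGraph.dist_le _
    _ = p.length := Walk.length_map _ _
    _ = _ := hp

private lemma dist_act [Group G] {φ : G →* Equiv.Perm V} {K : SimpleGraph V}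
    (hc : K.Connected) (ha : ActsOn φ K) (g : G) (a b : V) :
    K.dist (φ g a) (φ g b) = K.dist a b := by
  refine le_antisymm (dist_act_le hc ha g a b) ?_
  have := dist_act_le hc ha g⁻¹ (φ g a) (φ g b)
  simpa using this

private lemma mem_stab_iff [Group G] {φ : G →* Equiv.Perm V} {g : G} {x : V} :
    g ∈ stab φ x ↔ φ g x = x := Iff.rfl

private lemma fixed_unique [Group G] {φ : G →* Equiv.Perm V} {K : SimpleGraph V}
    (hc : K.Connected) (hfine : Fine K) (ha : ActsOn φ K) (hs : FiniteEdgeStabs φ K)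
    (H : Subgroup G) (hinf : (H : Set G).Infinite)
    {a b : V} (hA : ∀ g ∈ H, φ g a = a) (hB : ∀ g ∈ H, φ g b = b) : a = b := by
  classical
  suffices hsuff : ∀ d (a b : V) (H : Subgroup G), (H : Set G).Infinite →
      (∀ g ∈ H, φ g a = a) → (∀ g ∈ H, φ g b = b) → K.dist a b = d → a = b from
    hsuff _ a b H hinf hA hB rfl
  intro d
  induction d using Nat.strong_induction_on with
  | _ d ih =>
  intro a b H hinf hA hB hd
  rcases Nat.lt_or_ge d 2 with hlt | hge
  · interval_cases d
    · exact hc.dist_eq_zero_iff.mp hd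
    · have hadj : K.Adj a b := SimpleGraph.dist_eq_one_iff_adj.mp hd
      have hsub : (H : Set G) ⊆ ((stab φ a ⊓ stab φ b : Subgroup G) : Set G) :=
        fun g hg => Subgroup.mem_inf.mpr ⟨hA g hg, hB g hg⟩
      exact absurd ((hs a b hadj).subset hsub) hinf
  · obtain ⟨p0, hp0⟩ := hc.exists_walk_length_eq_dist a b
    obtain ⟨p, hpath, hplen⟩ : ∃ p : K.Walk a b, p.IsPath ∧ p.length = d :=
      ⟨p0.bypass, p0.bypass_isPath, by
        have h1 := p0.length_bypass_le
        have h2 := SimpleGraph.dist_le p0.bypass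
        omega⟩
    clear hp0
    cases p with
    | nil => simp at hplen; omega
    | @cons _ w _ hvw q =>
      rw [Walk.cons_isPath_iff] at hpath
      obtain ⟨hq, haq⟩ := hpath
      rw [Walk.length_cons] at hplen
      by_cases hS : ((fun g => φ g w) '' (H : Set G)).Finite
      · obtain ⟨w', hw'S, hfib⟩ : ∃ w' ∈ (fun g => φ g w) '' (H : Set G),
            {g : G | g ∈ H ∧ φ g w = w'}.Infinite := by
          by_contra hcon
          push_neg at hcon
          have hsub : (H : Set G) ⊆
              ⋃ w' ∈ (fun g => φ g w) '' (H : Set G), {g : G | g ∈ H ∧ φ g w = w'} :=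
            fun g hg => Set.mem_biUnion ⟨g, hg, rfl⟩ ⟨hg, rfl⟩
          exact hinf ((hS.biUnion fun w' hw' =>
            hcon w' hw').subset hsub)
        obtain ⟨h₀, hh₀H, hh₀w⟩ := hfib.nonempty
        have hH'inf : ((H ⊓ stab φ w' : Subgroup G) : Set G).Infinite := by
          have himg : (fun g => g * h₀⁻¹) '' {g : G | g ∈ H ∧ φ g w = w'} ⊆
              ((H ⊓ stab φ w' : Subgroup G) : Set G) := by
            rintro _ ⟨g, ⟨hgH, hgw⟩, rfl⟩
            refine Subgroup.mem_inf.mpr ⟨mul_mem hgH (inv_mem hh₀H), ?_⟩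
            have hinv : φ h₀⁻¹ w' = w := by
              rw [← hh₀w, map_inv]; exact Equiv.symm_apply_apply _ _
            show φ (g * h₀⁻¹) w' = w'
            rw [map_mul, Equiv.Perm.mul_apply, hinv, hgw]
          exact ((hfib.image fun x _ y _ h => mul_right_cancel h).mono himg)
        have hdwb : K.dist w b = d - 1 := by
          have hle : K.dist w b ≤ d - 1 := by
            have := SimpleGraph.dist_le q; omega
          have htri := hc.dist_triangle (u := a) (v := w) (w := b)
          have haw : K.dist a w ≤ 1 := by
            have := SimpleGraph.dist_le hvw.toWalk; simpa using this
          omega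
        have hdist : K.dist w' b = d - 1 := by
          have hact := dist_act hc ha h₀ w b
          rw [hh₀w, hB h₀ hh₀H] at hact
          rw [hact, hdwb]
        have hw'b : w' = b := ih (d - 1) (by omega) w' b (H ⊓ stab φ w') hH'inf
          (fun g hg => (Subgroup.mem_inf.mp hg).2)
          (fun g hg => hB g (Subgroup.mem_inf.mp hg).1) hdist
        rw [hw'b, SimpleGraph.dist_self] at hdist
        omega
      · have hTfin : (⋃ n ∈ Set.Iic (2 * d),
            {c : K.Walk a a | c.IsCycle ∧ c.length = n ∧ s(a, w) ∈ c.edges}).Finite :=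
          Set.Finite.biUnion (Set.finite_Iic (2 * d)) fun n _ => hfine n a w hvw
        have key : ∀ w' ∈ ((fun g => φ g w) '' (H : Set G)) \ {w},
            ∃ c : K.Walk a a, c ∈ (⋃ n ∈ Set.Iic (2 * d),
              {c : K.Walk a a | c.IsCycle ∧ c.length = n ∧ s(a, w) ∈ c.edges}) ∧
              c.support.tail.head? = some w' := by
          rintro w' ⟨⟨g, hgH, hgw0⟩, hw'ne⟩
          have hgw : φ g w = w' := hgw0
          have hne : w' ≠ w := by simpa using hw'ne
          have hfa : φ g a = a := hA g hgH
          have hfb : φ g b = b := hB g hgH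
          have hadj' : K.Adj a w' := by
            have := ha g a w hvw; rwa [hfa, hgw] at this
          have hp'path : ((q.map (actHom φ ha g)).copy hgw hfb).IsPath := by
            refine (Walk.isPath_copy _ _ _).mpr ?_
            exact Walk.map_isPath_of_injective (φ g).injective hq
          have hap' : a ∉ ((q.map (actHom φ ha g)).copy hgw hfb).support := by
            rw [Walk.support_copy (q.map (actHom φ ha g)) hgw hfb, Walk.support_map]
            intro hmem
            obtain ⟨xx, hxx, hxa⟩ := List.mem_map.mp hmem
            have : xx = a := (φ g).injective (by rw [show (actHom φ ha g) xx = φ g xx from rfl] at hxa; rw [hxa, hfa])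
            exact haq (this ▸ hxx)
          have hlp : ((q.map (actHom φ ha g)).copy hgw hfb).length = q.length := by
            exact (Walk.length_copy _ _ _).trans (Walk.length_map _ _)
          obtain ⟨c, hcyc, hce, hclen, hchead⟩ :=
            splice hvw hadj' hne q hq haq _ hp'path hap'
          refine ⟨c, ?_, hchead⟩
          refine Set.mem_biUnion (Set.mem_Iic.mpr ?_) ⟨hcyc, rfl, hce⟩
          rw [hlp] at hclen
          omega
        choose! C hCT hChead using key
        have hinj : Set.InjOn C (((fun g => φ g w) '' (H : Set G)) \ {w}) := by
          intro x hx y hy hxy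
          have h1 := hChead x hx
          have h2 := hChead y hy
          rw [hxy, h2] at h1
          exact (Option.some.inj h1).symm
        have hSinf : (((fun g => φ g w) '' (H : Set G)) \ {w}).Infinite :=
          Set.Infinite.diff hS (Set.finite_singleton w)
        have himsub : C '' (((fun g => φ g w) '' (H : Set G)) \ {w}) ⊆
            ⋃ n ∈ Set.Iic (2 * d),
              {c : K.Walk a a | c.IsCycle ∧ c.length = n ∧ s(a, w) ∈ c.edges} := by
          rintro _ ⟨x, hx, rfl⟩
          exact hCT x hx
        exact absurd hTfin ((hSinf.image hinj).mono himsub)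

private lemma stab_conj [Group G] (φ : G →* Equiv.Perm V) (g : G) (x : V) :
    stab φ (φ g x) = conjSub g (stab φ x) := by
  ext h
  rw [mem_stab_iff]
  constructor
  · intro hh
    refine ⟨g⁻¹ * h * g, ?_, by simp [MulAut.conj_apply]; group⟩
    show φ (g⁻¹ * h * g) x = x
    simp only [map_mul, map_inv, Equiv.Perm.mul_apply, hh, Equiv.Perm.coe_inv, Equiv.symm_apply_apply]
  · rintro ⟨y, hy, rfl⟩
    have hyx : φ y x = x := hy
    simp only [MulEquiv.toMonoidHom_eq_coe, MonoidHom.coe_coe, MulAut.conj_apply]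
    rw [map_mul, map_mul, map_inv, Equiv.Perm.mul_apply, Equiv.Perm.mul_apply,
      Equiv.Perm.coe_inv, Equiv.symm_apply_apply, hyx]


/-- If `K₂ ↪ K₁` is a `G`-equivariant simplicial embedding of `(G,Ps)`-graphs,
then every infinite-valence vertex of `K₁` lies in the image of `K₂`. -/
theorem infinite_valence_vertex_mem_image {V₁ : Type u} {V₂ : Type*} [Group G]
    (φ₁ : G →* Equiv.Perm V₁) (φ₂ : G →* Equiv.Perm V₂)
    (Ps : Set (Subgroup G)) (K₁ : SimpleGraph V₁) (K₂ : SimpleGraph V₂)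
    (hK₁ : IsGPGraph φ₁ Ps K₁) (hK₂ : IsGPGraph φ₂ Ps K₂)
    (f : V₂ → V₁) (hinj : Function.Injective f)
    (hadj : ∀ u w : V₂, K₂.Adj u w → K₁.Adj (f u) (f w))
    (hequiv : ∀ (g : G) (x : V₂), f (φ₂ g x) = φ₁ g (f x)) :
    ∀ v : V₁, (K₁.neighborSet v).Infinite → v ∈ Set.range f := by
  classical
  intro v hv
  obtain ⟨F, hF, horb⟩ := hK₁.finOrbits
  choose! gfun pfun hmem hfst hsnd using fun (u : V₁) (hu : K₁.Adj v u) => horb v u hu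
  have hex : ∃ pp ∈ F, {u : V₁ | K₁.Adj v u ∧ pfun u = pp}.Infinite := by
    by_contra hcon
    push_neg at hcon
    have hsub : (K₁.neighborSet v) ⊆ ⋃ pp ∈ F, {u : V₁ | K₁.Adj v u ∧ pfun u = pp} :=
      fun u hu => Set.mem_biUnion (hmem u hu) ⟨hu, rfl⟩
    exact hv ((hF.biUnion fun pp hpp => hcon pp hpp).subset hsub)
  obtain ⟨pp, hppF, hfib⟩ := hex
  obtain ⟨u₀, hu₀⟩ := hfib.nonempty
  have hstabinf : ((stab φ₁ v : Set G)).Infinite := by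
    have hinj : Set.InjOn (fun u => gfun u * (gfun u₀)⁻¹)
        {u : V₁ | K₁.Adj v u ∧ pfun u = pp} := by
      intro x hx y hy hxy
      have hgg : gfun x = gfun y := mul_right_cancel hxy
      have hx2 := hsnd x hx.1
      have hy2 := hsnd y hy.1
      rw [hx.2] at hx2
      rw [hy.2] at hy2
      rw [hgg] at hx2
      exact hx2.symm.trans hy2
    have hmaps : (fun u => gfun u * (gfun u₀)⁻¹) '' {u : V₁ | K₁.Adj v u ∧ pfun u = pp}
        ⊆ (stab φ₁ v : Set G) := by
      rintro _ ⟨x, hx, rfl⟩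
      have h1 := hfst x hx.1
      have h0 := hfst u₀ hu₀.1
      rw [hx.2] at h1
      rw [hu₀.2] at h0
      show φ₁ (gfun x * (gfun u₀)⁻¹) v = v
      have hinv : φ₁ (gfun u₀)⁻¹ v = pp.1 := by
        rw [← h0, map_inv]; exact Equiv.symm_apply_apply _ _
      rw [map_mul, Equiv.Perm.mul_apply, hinv, h1]
    exact (hfib.image hinj).mono hmaps
  obtain ⟨P, hPmem, g, hPconj⟩ := hK₁.parab v hstabinf
  obtain ⟨x, hx⟩ := hK₂.reps P hPmem
  have hstab2 : stab φ₂ (φ₂ g x) = stab φ₁ v := by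
    rw [stab_conj, hx, hPconj]
  have hHb : ∀ g' ∈ stab φ₁ v, φ₁ g' (f (φ₂ g x)) = f (φ₂ g x) := by
    intro g' hg'
    have hmem2 : φ₂ g' (φ₂ g x) = φ₂ g x := by
      rw [← mem_stab_iff, hstab2]; exact hg'
    rw [← hequiv, hmem2]
  have hfix : v = f (φ₂ g x) :=
    fixed_unique hK₁.conn hK₁.fine hK₁.acts hK₁.finStabs (stab φ₁ v) hstabinf
      (fun g' hg' => hg') hHb
  exact ⟨φ₂ g x, hfix.symm⟩
end
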